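/- arXiv:2312.17675 — 4 statements merged into one kernel-verified Lean document; each statement's English description precedes it below -/
import Mathlib

section
/- Let f, g : [a, b] → ℝ be continuous with a < b, and suppose the equalizer E = {x ∈ [a, b] : f(x) = g(x)} is finite. Assume: (1) for any two consecutive points x < y of E, f(t) < g(t) for all t ∈ (x, y) (no 'f-top bigon'); and (2) at every point x ∈ E ∩ (a, b), the function f − g changes sign at x, i.e., there exists ε > 0 such that f − g is negative on one side of x and positive on the other side within (x − ε, x + ε) ∩ [a, b] (no 'touching'). Then E has at most 2 elements. -/
theorem at_most_two_intersections (a b : ℝ) (hab : a < b) (f g : ℝ → ℝ)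
    (hf : ContinuousOn f (Set.Icc a b)) (hg : ContinuousOn g (Set.Icc a b))
    (E : Set ℝ) (hE : E = {x ∈ Set.Icc a b | f x = g x}) (hEfin : E.Finite)
    -- (1) no f-top bigon: between consecutive intersection points, f < g
    (htop : ∀ x ∈ E, ∀ y ∈ E, x < y → (∀ z ∈ E, ¬ (x < z ∧ z < y)) →
      ∀ t ∈ Set.Ioo x y, f t < g t)
    -- (2) sign change (no touching) at interior intersection points
    (hsign : ∀ x ∈ E ∩ Set.Ioo a b, ∃ ε > 0,
      ((∀ t ∈ Set.Ioo (x - ε) x ∩ Set.Icc a b, f t - g t < 0) ∧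
        (∀ t ∈ Set.Ioo x (x + ε) ∩ Set.Icc a b, 0 < f t - g t)) ∨
      ((∀ t ∈ Set.Ioo (x - ε) x ∩ Set.Icc a b, 0 < f t - g t) ∧
        (∀ t ∈ Set.Ioo x (x + ε) ∩ Set.Icc a b, f t - g t < 0))) :
    E.ncard ≤ 2 := by
  by_contra h
  push_neg at h
  -- work with the finset
  set s : Finset ℝ := hEfin.toFinset with hs
  have hmem : ∀ w : ℝ, w ∈ s ↔ w ∈ E := fun w => hEfin.mem_toFinset
  have hcard : 3 ≤ s.card := by
    have : E.ncard = s.card := Set.ncard_eq_toFinset_card E hEfin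
    omega
  have hsne : s.Nonempty := Finset.card_pos.mp (by omega)
  have hIcc : ∀ w ∈ E, w ∈ Set.Icc a b := by
    intro w hw; rw [hE] at hw; exact hw.1
  -- min and max
  set m := s.min' hsne with hm
  set M := s.max' hsne with hM
  have hmmem : m ∈ s := s.min'_mem hsne
  have hMmem : M ∈ s := s.max'_mem hsne
  -- a middle element
  have hmid : ((s.erase m).erase M).Nonempty := by
    apply Finset.card_pos.mp
    have h1 : m ∈ s := hmmem
    have := Finset.card_erase_of_mem h1
    have hcard2 : 2 ≤ (s.erase m).card := by omega
    by_cases hMe : M ∈ s.erase m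
    · have := Finset.card_erase_of_mem hMe
      omega
    · rw [Finset.erase_eq_of_notMem hMe]; omega
  obtain ⟨y, hy⟩ := hmid
  have hyM : y ≠ M := Finset.ne_of_mem_erase hy
  have hym : y ≠ m := Finset.ne_of_mem_erase (Finset.mem_of_mem_erase hy)
  have hys : y ∈ s := Finset.mem_of_mem_erase (Finset.mem_of_mem_erase hy)
  have hmy : m < y := lt_of_le_of_ne (s.min'_le y hys) (Ne.symm hym)
  have hyM' : y < M := lt_of_le_of_ne (s.le_max' y hys) hyM
  -- neighbors of y
  have hLne : (s.filter (· < y)).Nonempty := ⟨m, Finset.mem_filter.mpr ⟨hmmem, hmy⟩⟩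
  have hRne : (s.filter (y < ·)).Nonempty := ⟨M, Finset.mem_filter.mpr ⟨hMmem, hyM'⟩⟩
  set x := (s.filter (· < y)).max' hLne with hx
  set z := (s.filter (y < ·)).min' hRne with hz
  have hxmem := (s.filter (· < y)).max'_mem hLne
  have hzmem := (s.filter (y < ·)).min'_mem hRne
  rw [Finset.mem_filter] at hxmem hzmem
  have hxE : x ∈ E := (hmem x).mp hxmem.1
  have hyE : y ∈ E := (hmem y).mp hys
  have hzE : z ∈ E := (hmem z).mp hzmem.1
  have hxy : x < y := hxmem.2
  have hyz : y < z := hzmem.2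
  -- consecutiveness
  have hconsL : ∀ w ∈ E, ¬ (x < w ∧ w < y) := by
    rintro w hw ⟨h1, h2⟩
    have : w ≤ x := (s.filter (· < y)).le_max' w (Finset.mem_filter.mpr ⟨(hmem w).mpr hw, h2⟩)
    linarith
  have hconsR : ∀ w ∈ E, ¬ (y < w ∧ w < z) := by
    rintro w hw ⟨h1, h2⟩
    have : z ≤ w := (s.filter (y < ·)).min'_le w (Finset.mem_filter.mpr ⟨(hmem w).mpr hw, h1⟩)
    linarith
  -- y is interior
  have hax : a ≤ x := (hIcc x hxE).1
  have hzb : z ≤ b := (hIcc z hzE).2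
  have hyint : y ∈ E ∩ Set.Ioo a b :=
    ⟨hyE, ⟨lt_of_le_of_lt hax hxy, lt_of_lt_of_le hyz hzb⟩⟩
  obtain ⟨ε, hε, hcase⟩ := hsign y hyint
  rcases hcase with ⟨_, hR⟩ | ⟨hL, _⟩
  · -- right of y: should be positive, but f < g on (y,z)
    set t := (y + min z (y + ε)) / 2 with ht
    have h1 : y < min z (y + ε) := lt_min hyz (by linarith)
    have hyt : y < t := by
      have := min_le_left z (y + ε); rw [ht]; linarith
    have htz : t < z := by
      have := min_le_left z (y + ε); rw [ht]; cases le_total z (y + ε) with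
      | inl h => rw [min_eq_left h] at ht ⊢; linarith
      | inr h => rw [min_eq_right h] at ht ⊢; linarith
    have htε : t < y + ε := by
      cases le_total z (y + ε) with
      | inl h => rw [ht, min_eq_left h]; linarith
      | inr h => rw [ht, min_eq_right h]; linarith
    have htab : t ∈ Set.Icc a b := ⟨by linarith [hyint.2.1], by linarith⟩
    have hlt : f t < g t := htop y hyE z hzE hyz hconsR t ⟨hyt, htz⟩
    have hgt : 0 < f t - g t := hR t ⟨⟨hyt, htε⟩, htab⟩
    linarith
  · -- left of y: should be positive, but f < g on (x,y)
    set t := (max x (y - ε) + y) / 2 with ht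
    have h1 : max x (y - ε) < y := max_lt hxy (by linarith)
    have hty : t < y := by
      have := le_max_left x (y - ε); rw [ht]; linarith
    have hxt : x < t := by
      have := le_max_left x (y - ε); rw [ht]; linarith
    have htε : y - ε < t := by
      have := le_max_right x (y - ε); rw [ht]; linarith
    have htab : t ∈ Set.Icc a b := ⟨by linarith, by linarith [hyint.2.2]⟩
    have hlt : f t < g t := htop x hxE y hyE hxy hconsL t ⟨hxt, hty⟩
    have hgt : 0 < f t - g t := hL t ⟨⟨htε, hty⟩, htab⟩
    linarith
end

section
/- Let m ≥ 1 and let M be a perfect matching on the cyclically ordered set ZMod (2m) (i.e., an involution without fixed points, viewed as m unordered pairs) such that every two distinct pairs of M interleave (cross) in the cyclic order. Then every pair of M has the form {i, i + m}. -/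
/-- `x` lies strictly inside the cyclic arc from `a` to `b` traversed in the
positive direction in `ZMod n`. -/
def CyclicBtw (n : ℕ) (a x b : ZMod n) : Prop :=
  0 < (x - a).val ∧ (x - a).val < (b - a).val

theorem crossing_matching_is_antipodal (m : ℕ) (hm : 1 ≤ m)
    (σ : Equiv.Perm (ZMod (2 * m)))
    (hinv : ∀ x, σ (σ x) = x) (hfix : ∀ x, σ x ≠ x)
    (hcross : ∀ i j : ZMod (2 * m), j ≠ i → j ≠ σ i → i ≠ σ j →
      Xor' (CyclicBtw (2 * m) i j (σ i)) (CyclicBtw (2 * m) i (σ j) (σ i))) :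
    ∀ i : ZMod (2 * m), σ i = i + (m : ZMod (2 * m)) := by
  haveI : NeZero (2 * m) := ⟨by omega⟩
  haveI : Fact (1 < 2 * m) := ⟨by omega⟩
  intro i
  set d := (σ i - i).val with hd
  have hvi : Function.Injective (ZMod.val (n := 2 * m)) := ZMod.val_injective _
  have hd_pos : 0 < d := by
    rcases Nat.eq_zero_or_pos d with h | h
    · exact absurd (sub_eq_zero.mp (by rwa [hd, ZMod.val_eq_zero] at h))
        (hfix i)
    · exact h
  have hd_lt : d < 2 * m := ZMod.val_lt _
  -- key step 1: σ maps the open arc (i, σ i) into the open arc (σ i, i)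
  have key1 : ∀ j, 0 < (j - i).val → (j - i).val < d → d < (σ j - i).val := by
    intro j h1 h2
    have hji : j ≠ i := by
      intro h; rw [h] at h1; simp at h1
    have hjsi : j ≠ σ i := by
      intro h; rw [h] at h2; exact absurd h2 (lt_irrefl d)
    have hisj : i ≠ σ j := fun h => hjsi (by rw [h, hinv])
    have hx := hcross i j hji hjsi hisj
    have hA : CyclicBtw (2 * m) i j (σ i) := ⟨h1, h2⟩
    have hnA : ¬ CyclicBtw (2 * m) i (σ j) (σ i) := by
      rcases hx with ⟨_, h⟩ | ⟨_, h⟩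
      · exact h
      · exact absurd hA h
    have hne0 : (σ j - i).val ≠ 0 := by
      intro h
      have : σ j = i := sub_eq_zero.mp (by rwa [ZMod.val_eq_zero] at h)
      exact hjsi (by rw [← this, hinv])
    have hned : (σ j - i).val ≠ d := by
      intro h
      have h2' : σ j - i = σ i - i := hvi (by rw [h, hd])
      have : σ j = σ i := by
        have := congrArg (· + i) h2'
        simpa using this
      exact hji (σ.injective this)
    have : ¬ (0 < (σ j - i).val ∧ (σ j - i).val < d) := hnA
    omega
  -- key step 2: σ maps the open arc (σ i, i) into the open arc (i, σ i)
  have key2 : ∀ j, d < (j - i).val → 0 < (σ j - i).val ∧ (σ j - i).val < d := by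
    intro j h1
    have hji : j ≠ i := by
      intro h; rw [h] at h1; simp at h1
    have hjsi : j ≠ σ i := by
      intro h; rw [h] at h1; exact absurd h1 (lt_irrefl d)
    have hisj : i ≠ σ j := fun h => hjsi (by rw [h, hinv])
    have hx := hcross i j hji hjsi hisj
    have hnA : ¬ CyclicBtw (2 * m) i j (σ i) := by
      intro ⟨_, h⟩; omega
    rcases hx with ⟨h, _⟩ | ⟨h, _⟩
    · exact absurd h hnA
    · exact h
  classical
  set A : Finset (ZMod (2 * m)) :=
    Finset.univ.filter (fun x => 0 < (x - i).val ∧ (x - i).val < d) with hA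
  set B : Finset (ZMod (2 * m)) :=
    Finset.univ.filter (fun x => d < (x - i).val) with hB
  have hAB : A.card ≤ B.card := Finset.card_le_card_of_injOn σ
    (fun j hj => by
      simp only [hA, hB, Finset.mem_coe, Finset.mem_filter, Finset.mem_univ, true_and] at hj ⊢
      exact key1 j hj.1 hj.2)
    σ.injective.injOn
  have hBA : B.card ≤ A.card := Finset.card_le_card_of_injOn σ
    (fun j hj => by
      simp only [hA, hB, Finset.mem_coe, Finset.mem_filter, Finset.mem_univ, true_and] at hj ⊢
      exact key2 j hj)
    σ.injective.injOn
  have hAcard : A.card = d - 1 := by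
    have hc : A.card = (Finset.Ico 1 d).card := by
      apply Finset.card_bij' (fun x _ => (x - i).val) (fun v _ => i + (v : ZMod (2 * m)))
      · intro a ha
        simp only [hA, Finset.mem_filter, Finset.mem_univ, true_and] at ha
        simp only [Finset.mem_Ico]
        omega
      · intro v hv
        simp only [Finset.mem_Ico] at hv
        simp only [hA, Finset.mem_filter, Finset.mem_univ, true_and]
        rw [add_sub_cancel_left, ZMod.val_cast_of_lt (by omega)]
        omega
      · intro a ha
        simp [ZMod.natCast_val, ZMod.cast_id]
      · intro v hv
        simp only [Finset.mem_Ico] at hv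
        rw [add_sub_cancel_left, ZMod.val_cast_of_lt (by omega)]
    rw [hc, Nat.card_Ico]
  have hBcard : B.card = 2 * m - 1 - d := by
    have hc : B.card = (Finset.Ico (d + 1) (2 * m)).card := by
      apply Finset.card_bij' (fun x _ => (x - i).val) (fun v _ => i + (v : ZMod (2 * m)))
      · intro a ha
        simp only [hB, Finset.mem_filter, Finset.mem_univ, true_and] at ha
        simp only [Finset.mem_Ico]
        exact ⟨by omega, ZMod.val_lt _⟩
      · intro v hv
        simp only [Finset.mem_Ico] at hv
        simp only [hB, Finset.mem_filter, Finset.mem_univ, true_and]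
        rw [add_sub_cancel_left, ZMod.val_cast_of_lt (by omega)]
        omega
      · intro a ha
        simp [ZMod.natCast_val, ZMod.cast_id]
      · intro v hv
        simp only [Finset.mem_Ico] at hv
        rw [add_sub_cancel_left, ZMod.val_cast_of_lt (by omega)]
    rw [hc, Nat.card_Ico]
    omega
  have hdm : d = m := by omega
  have hsub : σ i - i = (m : ZMod (2 * m)) := by
    have h1 : ((σ i - i).val : ZMod (2 * m)) = ((m : ℕ) : ZMod (2 * m)) := by
      rw [← hd, hdm]
    rwa [ZMod.natCast_val, ZMod.cast_id] at h1
  have := sub_eq_iff_eq_add.mp hsub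
  rw [this, add_comm]
end

section
/- Let F be a finite family of continuous functions, each defined on a compact subinterval of [a, b], whose graphs pairwise intersect in at most one point, and let P be a finite set of points in ℝ² with pairwise distinct x-coordinates lying in [a, b], such that no two points of P lie on a common graph of F. Suppose that for every finite family F' ⊇ F of such functions with pairwise at-most-one-point intersecting graphs and every pair p, q ∈ P with distinct x-coordinates not on a common graph of F', there exists a continuous function on the interval between the x-coordinates of p and q whose graph joins p to q and meets each graph of F' at most once. Then there exists a family G of continuous functions containing F, with all graphs in G pairwise intersecting in at most one point, such that for every pair of distinct points p, q ∈ P some graph in G has endpoints p and q. -/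
/-- A pseudosegment is given by a triple `(u, v, f)`; its graph is the graph of
`f` restricted to `[u, v]`. -/
def PSGraph (s : ℝ × ℝ × (ℝ → ℝ)) : Set (ℝ × ℝ) :=
  {p : ℝ × ℝ | p.1 ∈ Set.Icc s.1 s.2.1 ∧ p.2 = s.2.2 p.1}

/-- A finite family of continuous functions on compact subintervals of `[a, b]`
whose graphs pairwise intersect in at most one point. -/
def NiceFamily (a b : ℝ) (S : Set (ℝ × ℝ × (ℝ → ℝ))) : Prop :=
  S.Finite ∧
  (∀ s ∈ S, s.1 ≤ s.2.1 ∧ Set.Icc s.1 s.2.1 ⊆ Set.Icc a b ∧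
    ContinuousOn s.2.2 (Set.Icc s.1 s.2.1)) ∧
  (∀ s ∈ S, ∀ t ∈ S, PSGraph s ≠ PSGraph t → (PSGraph s ∩ PSGraph t).Subsingleton)

lemma endpoint_aux {p q p₀ q₀ : ℝ × ℝ} {g : ℝ → ℝ}
    (hle : p₀.1 ≤ q₀.1)
    (hw : |p₀.1 - q₀.1| ≤ |p.1 - q.1|)
    (hg1 : g p₀.1 = p₀.2) (hg2 : g q₀.1 = q₀.2)
    (hp : p ∈ PSGraph (min p₀.1 q₀.1, max p₀.1 q₀.1, g))
    (hq : q ∈ PSGraph (min p₀.1 q₀.1, max p₀.1 q₀.1, g)) :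
    (p = p₀ ∧ q = q₀) ∨ (p = q₀ ∧ q = p₀) := by
  obtain ⟨⟨hp1, hp2⟩, hp3⟩ := hp
  obtain ⟨⟨hq1, hq2⟩, hq3⟩ := hq
  rw [min_eq_left hle] at hp1 hq1
  rw [max_eq_right hle] at hp2 hq2
  have habs : |p₀.1 - q₀.1| = q₀.1 - p₀.1 := by
    rw [abs_sub_comm]; exact abs_of_nonneg (by linarith)
  rcases le_total p.1 q.1 with h | h
  · have habs2 : |p.1 - q.1| = q.1 - p.1 := by
      rw [abs_sub_comm]; exact abs_of_nonneg (by linarith)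
    have h1 : p.1 = p₀.1 := by rw [habs, habs2] at hw; linarith
    have h2 : q.1 = q₀.1 := by rw [habs, habs2] at hw; linarith
    exact Or.inl ⟨Prod.ext_iff.mpr ⟨h1, by rw [hp3, h1]; exact hg1⟩,
      Prod.ext_iff.mpr ⟨h2, by rw [hq3, h2]; exact hg2⟩⟩
  · have habs2 : |p.1 - q.1| = p.1 - q.1 := abs_of_nonneg (by linarith)
    have h1 : p.1 = q₀.1 := by rw [habs, habs2] at hw; linarith
    have h2 : q.1 = p₀.1 := by rw [habs, habs2] at hw; linarith
    exact Or.inr ⟨Prod.ext_iff.mpr ⟨h1, by rw [hp3, h1]; exact hg2⟩,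
      Prod.ext_iff.mpr ⟨h2, by rw [hq3, h2]; exact hg1⟩⟩

lemma endpoint_pair {p q p₀ q₀ : ℝ × ℝ} {g : ℝ → ℝ}
    (hw : |p₀.1 - q₀.1| ≤ |p.1 - q.1|)
    (hg1 : g p₀.1 = p₀.2) (hg2 : g q₀.1 = q₀.2)
    (hp : p ∈ PSGraph (min p₀.1 q₀.1, max p₀.1 q₀.1, g))
    (hq : q ∈ PSGraph (min p₀.1 q₀.1, max p₀.1 q₀.1, g)) :
    (p = p₀ ∧ q = q₀) ∨ (p = q₀ ∧ q = p₀) := by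
  rcases le_total p₀.1 q₀.1 with h | h
  · exact endpoint_aux h hw hg1 hg2 hp hq
  · have := endpoint_aux (p := p) (q := q) (p₀ := q₀) (q₀ := p₀) h
      (by rwa [abs_sub_comm]) hg2 hg1
      (by rw [min_comm q₀.1 p₀.1, max_comm q₀.1 p₀.1]; exact hp)
      (by rw [min_comm q₀.1 p₀.1, max_comm q₀.1 p₀.1]; exact hq)
    tauto

theorem iterated_extension (a b : ℝ) (F : Set (ℝ × ℝ × (ℝ → ℝ)))
    (hF : NiceFamily a b F)
    (P : Set (ℝ × ℝ)) (hPfin : P.Finite)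
    (hPx : ∀ p ∈ P, p.1 ∈ Set.Icc a b)
    (hPdist : ∀ p ∈ P, ∀ q ∈ P, p ≠ q → p.1 ≠ q.1)
    (hPF : ∀ p ∈ P, ∀ q ∈ P, p ≠ q → ∀ s ∈ F, ¬ (p ∈ PSGraph s ∧ q ∈ PSGraph s))
    -- single-edge extension property for every larger nice family
    (hext : ∀ F' : Set (ℝ × ℝ × (ℝ → ℝ)), F ⊆ F' → NiceFamily a b F' →
      ∀ p ∈ P, ∀ q ∈ P, p.1 ≠ q.1 →
        (∀ s ∈ F', ¬ (p ∈ PSGraph s ∧ q ∈ PSGraph s)) →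
        ∃ g : ℝ → ℝ, ContinuousOn g (Set.Icc (min p.1 q.1) (max p.1 q.1)) ∧
          g p.1 = p.2 ∧ g q.1 = q.2 ∧
          ∀ s ∈ F', (PSGraph (min p.1 q.1, max p.1 q.1, g) ∩ PSGraph s).Subsingleton) :
    ∃ G : Set (ℝ × ℝ × (ℝ → ℝ)), F ⊆ G ∧ NiceFamily a b G ∧
      ∀ p ∈ P, ∀ q ∈ P, p ≠ q → ∃ s ∈ G,
        ({(s.1, s.2.2 s.1), (s.2.1, s.2.2 s.2.1)} : Set (ℝ × ℝ)) = {p, q} := by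
  suffices key : ∀ n : ℕ, ∀ E : Finset ((ℝ × ℝ) × (ℝ × ℝ)), E.card ≤ n →
      (∀ e ∈ E, e.1 ∈ P ∧ e.2 ∈ P ∧ e.1 ≠ e.2) →
      ∃ G : Set (ℝ × ℝ × (ℝ → ℝ)), F ⊆ G ∧ NiceFamily a b G ∧
        (∀ e ∈ E, ∃ s ∈ G,
          ({(s.1, s.2.2 s.1), (s.2.1, s.2.2 s.2.1)} : Set (ℝ × ℝ)) = {e.1, e.2}) ∧
        (∀ s ∈ G, s ∉ F → ∃ e ∈ E, s.1 = min e.1.1 e.2.1 ∧ s.2.1 = max e.1.1 e.2.1 ∧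
          s.2.2 e.1.1 = e.1.2 ∧ s.2.2 e.2.1 = e.2.2) by
    classical
    set E : Finset ((ℝ × ℝ) × (ℝ × ℝ)) :=
      (hPfin.toFinset ×ˢ hPfin.toFinset).filter (fun e => e.1 ≠ e.2) with hE
    have hEmem : ∀ e ∈ E, e.1 ∈ P ∧ e.2 ∈ P ∧ e.1 ≠ e.2 := by
      intro e he
      simp only [hE, Finset.mem_filter, Finset.mem_product,
        Set.Finite.mem_toFinset] at he
      exact ⟨he.1.1, he.1.2, he.2⟩
    obtain ⟨G, hFG, hG, hconn, -⟩ := key E.card E le_rfl hEmem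
    refine ⟨G, hFG, hG, ?_⟩
    intro p hp q hq hne
    exact hconn (p, q) (by
      simp only [hE, Finset.mem_filter, Finset.mem_product, Set.Finite.mem_toFinset]
      exact ⟨⟨hp, hq⟩, hne⟩)
  classical
  intro n
  induction n with
  | zero =>
    intro E hcard _
    have : E = ∅ := Finset.card_eq_zero.mp (Nat.le_zero.mp hcard)
    subst this
    exact ⟨F, subset_rfl, hF, by simp, fun s hs hsF => absurd hs hsF⟩
  | succ n ih =>
    intro E hcard hEmem
    rcases E.eq_empty_or_nonempty with rfl | hne
    · exact ⟨F, subset_rfl, hF, by simp, fun s hs hsF => absurd hs hsF⟩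
    obtain ⟨e, he, hmax⟩ := E.exists_max_image (fun e => |e.1.1 - e.2.1|) hne
    set E' := E.erase e with hE'
    have hcard' : E'.card ≤ n := by
      rw [hE', Finset.card_erase_of_mem he]; omega
    obtain ⟨G, hFG, hG, hconn, hform⟩ := ih E' hcard'
      (fun e' he' => hEmem e' (Finset.mem_of_mem_erase he'))
    by_cases hsw : (e.2, e.1) ∈ E'
    · refine ⟨G, hFG, hG, ?_, ?_⟩
      · intro e'' he''
        by_cases h : e'' = e
        · obtain ⟨s, hs, hset⟩ := hconn (e.2, e.1) hsw
          exact ⟨s, hs, by rw [hset, h]; exact Set.pair_comm _ _⟩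
        · exact hconn e'' (Finset.mem_erase.mpr ⟨h, he''⟩)
      · intro s hs hsF
        obtain ⟨e', he', h'⟩ := hform s hs hsF
        exact ⟨e', Finset.mem_of_mem_erase he', h'⟩
    · obtain ⟨hp, hq, hne2⟩ := hEmem e he
      have hx : e.1.1 ≠ e.2.1 := hPdist _ hp _ hq hne2
      have hpre : ∀ s ∈ G, ¬ (e.1 ∈ PSGraph s ∧ e.2 ∈ PSGraph s) := by
        rintro s hs ⟨h1, h2⟩
        by_cases hsF : s ∈ F
        · exact hPF _ hp _ hq hne2 s hsF ⟨h1, h2⟩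
        · obtain ⟨e', he', hm, hM, hg1, hg2⟩ := hform s hs hsF
          have hseq : s = (min e'.1.1 e'.2.1, max e'.1.1 e'.2.1, s.2.2) := by
            rw [← hm, ← hM]
          have hw : |e'.1.1 - e'.2.1| ≤ |e.1.1 - e.2.1| :=
            hmax e' (Finset.mem_of_mem_erase he')
          rw [hseq] at h1 h2
          rcases endpoint_pair hw hg1 hg2 h1 h2 with ⟨ha1, ha2⟩ | ⟨ha1, ha2⟩
          · exact (Finset.ne_of_mem_erase he')
              (by rw [← Prod.mk.eta (p := e'), ← ha1, ← ha2])
          · exact hsw (by rw [hE']; rw [← Prod.mk.eta (p := e'), ← ha1, ← ha2] at he'; exact he')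
      obtain ⟨g, hgc, hge1, hge2, hgint⟩ := hext G hFG hG e.1 hp e.2 hq hx hpre
      set t : ℝ × ℝ × (ℝ → ℝ) := (min e.1.1 e.2.1, max e.1.1 e.2.1, g) with ht
      obtain ⟨ha1, hb1⟩ := hPx _ hp
      obtain ⟨ha2, hb2⟩ := hPx _ hq
      have hGt : NiceFamily a b (insert t G) := by
        refine ⟨hG.1.insert t, ?_, ?_⟩
        · rintro s (rfl | hs)
          · refine ⟨min_le_max, ?_, hgc⟩
            intro x hx'
            exact ⟨le_trans (le_min ha1 ha2) hx'.1, le_trans hx'.2 (max_le hb1 hb2)⟩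
          · exact hG.2.1 s hs
        · rintro s (rfl | hs) s' (rfl | hs') hne'
          · exact absurd rfl hne'
          · exact hgint s' hs'
          · rw [Set.inter_comm]; exact hgint s hs
          · exact hG.2.2 s hs s' hs' hne'
      refine ⟨insert t G, hFG.trans (Set.subset_insert _ _), hGt, ?_, ?_⟩
      · intro e'' he''
        by_cases h : e'' = e
        · subst h
          refine ⟨t, Set.mem_insert _ _, ?_⟩
          rcases hx.lt_or_gt with hlt | hlt
          · have h1 : t.1 = e''.1.1 := min_eq_left hlt.le
            have h2 : t.2.1 = e''.2.1 := max_eq_right hlt.le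
            rw [h1, h2]
            show ({(e''.1.1, g e''.1.1), (e''.2.1, g e''.2.1)} : Set (ℝ × ℝ)) = _
            rw [hge1, hge2]
          · have h1 : t.1 = e''.2.1 := min_eq_right hlt.le
            have h2 : t.2.1 = e''.1.1 := max_eq_left hlt.le
            rw [h1, h2]
            show ({(e''.2.1, g e''.2.1), (e''.1.1, g e''.1.1)} : Set (ℝ × ℝ)) = _
            rw [hge1, hge2]
            exact Set.pair_comm _ _
        · obtain ⟨s, hs, hset⟩ := hconn e'' (Finset.mem_erase.mpr ⟨h, he''⟩)
          exact ⟨s, Set.mem_insert_of_mem _ hs, hset⟩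
      · rintro s (rfl | hs) hsF
        · exact ⟨e, he, rfl, rfl, hge1, hge2⟩
        · obtain ⟨e', he', h'⟩ := hform s hs hsF
          exact ⟨e', Finset.mem_of_mem_erase he', h'⟩
end

section
/- Let n ≥ 1 and let v_1, …, v_{2n}, v'_1, …, v'_{2n} be 4n pairwise distinct points on the circle S¹ = ℝ/2πℤ such that for all i ≠ j, the closed arcs [v_i, v'_i] and [v_j, v'_j] (each taken in the positive direction) have endpoints that alternate around the circle (i.e., exactly one of v_j, v'_j lies in the open arc (v_i, v'_i)). Then there exists a homeomorphism f : S¹ → S¹ such that f(v_i) and f(v'_i) are antipodal points for every i. -/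
open Real in
/-- The open arc of the circle `ℝ/2πℤ` from `p` to `q`, traversed in the
positive direction. -/
def openArc (p q : AddCircle (2 * π)) : Set (AddCircle (2 * π)) :=
  {x | ∃ P X Q : ℝ, (P : AddCircle (2 * π)) = p ∧ (X : AddCircle (2 * π)) = x ∧
    (Q : AddCircle (2 * π)) = q ∧ P < X ∧ X < Q ∧ Q < P + 2 * π}

section Aux
open Real Finset

noncomputable section PL
variable {N : ℕ} (hN : 0 < N) (u : Fin N → ℝ)

def clamp (t : ℝ) : ℝ := max 0 (min 1 t)

lemma clamp_mono : Monotone clamp := fun _ _ h =>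
  max_le_max le_rfl (min_le_min le_rfl h)

lemma clamp_nonneg (t : ℝ) : 0 ≤ clamp t := le_max_left _ _
lemma clamp_le_one (t : ℝ) : clamp t ≤ 1 := max_le zero_le_one (min_le_left _ _)
lemma clamp_of_le (t : ℝ) (h : 1 ≤ t) : clamp t = 1 := by
  unfold clamp; rw [min_eq_left h, max_eq_right zero_le_one]
lemma clamp_of_nonpos (t : ℝ) (h : t ≤ 0) : clamp t = 0 := by
  unfold clamp; rw [max_eq_left]; exact (min_le_right _ _).trans h
lemma clamp_of_mem (t : ℝ) (h0 : 0 ≤ t) (h1 : t ≤ 1) : clamp t = t := by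
  unfold clamp; rw [min_eq_right h1, max_eq_right h0]
lemma clamp_continuous : Continuous clamp :=
  continuous_const.max (continuous_const.min continuous_id)
lemma clamp_lt (s t : ℝ) (hs0 : 0 ≤ s) (hs1 : s < 1) (hst : s < t) : clamp s < clamp t := by
  rw [clamp_of_mem s hs0 hs1.le]
  exact lt_of_lt_of_le (lt_min hs1 hst) (le_max_right _ _)

def nxt : Fin N → ℝ := fun k =>
  if h : (k : ℕ) + 1 < N then u ⟨(k : ℕ) + 1, h⟩ else u ⟨0, hN⟩ + 2 * π

def Gmap : ℝ → ℝ := fun y =>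
  (2 * π / N) * ∑ k : Fin N, clamp ((y - u k) / (nxt hN u k - u k))

def Fmap : ℝ → ℝ := fun x =>
  2 * π * ⌊(x - u ⟨0, hN⟩) / (2 * π)⌋ + Gmap hN u (x - 2 * π * ⌊(x - u ⟨0, hN⟩) / (2 * π)⌋)

variable (hu : StrictMono u) (hmem : ∀ k, u k ∈ Set.Ico (0:ℝ) (2 * π))

section lemmas
include hu hmem

lemma nxt_gt (k : Fin N) : u k < nxt hN u k := by
  unfold nxt
  split_ifs with h
  · exact hu (by simp [Fin.lt_def])
  · have h1 := (hmem k).2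
    have h2 := (hmem ⟨0, hN⟩).1
    linarith

omit hu in
lemma nxt_le (k : Fin N) : nxt hN u k ≤ u ⟨0, hN⟩ + 2 * π := by
  unfold nxt
  split_ifs with h
  · have h1 := (hmem ⟨(k:ℕ)+1, h⟩).2
    have h2 := (hmem ⟨0, hN⟩).1
    linarith
  · exact le_refl _

lemma Gmap_mono : Monotone (Gmap hN u) := by
  intro a b hab
  unfold Gmap
  have hc : (0:ℝ) < 2 * π / N := by
    have := pi_pos; positivity
  apply mul_le_mul_of_nonneg_left _ hc.le
  apply Finset.sum_le_sum
  intro k _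
  apply clamp_mono
  have hd : 0 < nxt hN u k - u k := by have := nxt_gt hN u hu hmem k; linarith
  exact div_le_div_of_nonneg_right (by linarith) hd.le

omit hu hmem in
lemma Gmap_continuous : Continuous (Gmap hN u) := by
  unfold Gmap
  apply continuous_const.mul
  apply continuous_finset_sum
  intro k _
  exact clamp_continuous.comp ((continuous_id.sub continuous_const).div_const _)

lemma Gmap_sample (a : Fin N) : Gmap hN u (u a) = 2 * π * a / N := by
  unfold Gmap
  have key : ∀ k : Fin N, clamp ((u a - u k) / (nxt hN u k - u k))
      = if (k : ℕ) < (a : ℕ) then 1 else 0 := by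
    intro k
    have hd : 0 < nxt hN u k - u k := by have := nxt_gt hN u hu hmem k; linarith
    split_ifs with h
    · apply clamp_of_le
      rw [le_div_iff₀ hd, one_mul]
      have : nxt hN u k ≤ u a := by
        unfold nxt
        have hlt : (k:ℕ) + 1 < N := lt_of_le_of_lt (Nat.succ_le_of_lt h) a.isLt
        rw [dif_pos hlt]
        rcases Nat.lt_or_ge ((k:ℕ)+1) (a:ℕ) with h'|h'
        · exact (hu (show (⟨(k:ℕ)+1, hlt⟩ : Fin N) < a from h')).le
        · have : (⟨(k:ℕ)+1, hlt⟩ : Fin N) = a := Fin.ext (le_antisymm (Nat.succ_le_of_lt h) h')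
          rw [this]
      linarith
    · apply clamp_of_nonpos
      apply div_nonpos_of_nonpos_of_nonneg _ hd.le
      have : u a ≤ u k := by
        rcases Nat.lt_or_ge (a:ℕ) (k:ℕ) with h'|h'
        · exact (hu (show a < k from h')).le
        · have : a = k := Fin.ext (le_antisymm (Nat.not_lt.mp h) h')
          rw [this]
      linarith
  rw [Finset.sum_congr rfl (fun k _ => key k)]
  rw [Finset.sum_boole]
  have : (filter (fun k : Fin N => (k:ℕ) < (a:ℕ)) univ) = Finset.Iio a := by
    ext k
    rw [Finset.mem_filter, Finset.mem_Iio, Fin.lt_def]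
    simp only [Finset.mem_univ, true_and]
  rw [this, Fin.card_Iio]
  ring

lemma Gmap_bot : Gmap hN u (u ⟨0, hN⟩) = 0 := by
  have := Gmap_sample hN u hu hmem ⟨0, hN⟩
  simpa using this

lemma Gmap_top : Gmap hN u (u ⟨0, hN⟩ + 2 * π) = 2 * π := by
  unfold Gmap
  have key : ∀ k : Fin N, clamp ((u ⟨0, hN⟩ + 2 * π - u k) / (nxt hN u k - u k)) = 1 := by
    intro k
    apply clamp_of_le
    have hd : 0 < nxt hN u k - u k := by have := nxt_gt hN u hu hmem k; linarith
    rw [le_div_iff₀ hd, one_mul]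
    have := nxt_le hN u hmem k
    linarith
  rw [Finset.sum_congr rfl (fun k _ => key k), Finset.sum_const]
  simp only [Finset.card_univ, Fintype.card_fin, nsmul_eq_mul, mul_one]
  have hNne : (N:ℝ) ≠ 0 := Nat.cast_ne_zero.mpr hN.ne'
  field_simp

/-- the bracketing index -/
lemma exists_bracket {y : ℝ} (h0 : u ⟨0, hN⟩ ≤ y) (h1 : y < u ⟨0, hN⟩ + 2 * π) :
    ∃ k : Fin N, u k ≤ y ∧ y < nxt hN u k := by
  classical
  set s := univ.filter (fun k : Fin N => u k ≤ y) with hs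
  have hne : s.Nonempty := ⟨⟨0, hN⟩, by simp [hs, h0]⟩
  obtain ⟨k, hk, hmax⟩ := s.exists_max_image (fun k => (k:ℕ)) hne
  rw [hs, Finset.mem_filter] at hk
  refine ⟨k, hk.2, ?_⟩
  unfold nxt
  split_ifs with h
  · by_contra hcon
    push_neg at hcon
    have : (⟨(k:ℕ)+1, h⟩ : Fin N) ∈ s := by
      rw [hs, Finset.mem_filter]; exact ⟨Finset.mem_univ _, hcon⟩
    have := hmax _ this
    simp at this
  · exact h1

lemma Gmap_strictMonoOn :
    StrictMonoOn (Gmap hN u) (Set.Icc (u ⟨0, hN⟩) (u ⟨0, hN⟩ + 2 * π)) := by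
  intro y hy y' hy' hlt
  have hy2 : y < u ⟨0, hN⟩ + 2 * π := lt_of_lt_of_le hlt hy'.2
  obtain ⟨k, hk1, hk2⟩ := exists_bracket hN u hu hmem hy.1 hy2
  unfold Gmap
  have hc : (0:ℝ) < 2 * π / N := by
    have := pi_pos; positivity
  apply (mul_lt_mul_iff_right₀ hc).mpr
  apply Finset.sum_lt_sum
  · intro j _
    apply clamp_mono
    have hd : 0 < nxt hN u j - u j := by have := nxt_gt hN u hu hmem j; linarith
    exact div_le_div_of_nonneg_right (by linarith) hd.le
  · refine ⟨k, Finset.mem_univ k, ?_⟩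
    have hd : 0 < nxt hN u k - u k := by have := nxt_gt hN u hu hmem k; linarith
    apply clamp_lt
    · apply div_nonneg (by linarith) hd.le
    · rw [div_lt_one hd]; linarith
    · exact (div_lt_div_iff_of_pos_right hd).mpr (by linarith)

end lemmas

section flemmas
variable (hu : StrictMono u) (hmem : ∀ k, u k ∈ Set.Ico (0:ℝ) (2 * π))
include hu hmem

lemma Gmap_lt_top {y : ℝ} (h0 : u ⟨0, hN⟩ ≤ y) (h1 : y < u ⟨0, hN⟩ + 2 * π) :
    Gmap hN u y < 2 * π := by
  have := Gmap_strictMonoOn hN u hu hmem (Set.mem_Icc.mpr ⟨h0, h1.le⟩)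
    (Set.mem_Icc.mpr ⟨by linarith [two_pi_pos], le_refl _⟩) h1
  rwa [Gmap_top hN u hu hmem] at this

lemma Gmap_nonneg {y : ℝ} (h0 : u ⟨0, hN⟩ ≤ y) : 0 ≤ Gmap hN u y := by
  have := Gmap_mono hN u hu hmem h0
  rwa [Gmap_bot hN u hu hmem] at this

omit hu hmem in
lemma y_mem (x : ℝ) :
    u ⟨0, hN⟩ ≤ x - 2 * π * ⌊(x - u ⟨0, hN⟩) / (2 * π)⌋ ∧
    x - 2 * π * ⌊(x - u ⟨0, hN⟩) / (2 * π)⌋ < u ⟨0, hN⟩ + 2 * π := by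
  set c := u ⟨0, hN⟩
  have h2p : (0:ℝ) < 2 * π := two_pi_pos
  have h1 : (⌊(x - c) / (2 * π)⌋ : ℝ) ≤ (x - c) / (2 * π) := Int.floor_le _
  have h2 : (x - c) / (2 * π) < ⌊(x - c) / (2 * π)⌋ + 1 := Int.lt_floor_add_one _
  have e : 2 * π * ((x - c) / (2 * π)) = x - c := by field_simp
  constructor
  · nlinarith [(mul_le_mul_of_nonneg_left h1 h2p.le)]
  · nlinarith [(mul_lt_mul_of_pos_left h2 h2p)]

lemma Fmap_strictMono : StrictMono (Fmap hN u) := by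
  intro x x' hxx
  have h2p : (0:ℝ) < 2 * π := two_pi_pos
  have hy := y_mem hN u x
  have hy' := y_mem hN u x'
  have hmm : ⌊(x - u ⟨0, hN⟩) / (2 * π)⌋ ≤ ⌊(x' - u ⟨0, hN⟩) / (2 * π)⌋ := by
    apply Int.floor_le_floor
    apply div_le_div_of_nonneg_right (by linarith) h2p.le
  rcases eq_or_lt_of_le hmm with he | hl
  · unfold Fmap
    rw [← he] at hy' ⊢
    have := Gmap_strictMonoOn hN u hu hmem (Set.mem_Icc.mpr ⟨hy.1, hy.2.le⟩)
      (Set.mem_Icc.mpr ⟨hy'.1, hy'.2.le⟩) (by linarith)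
    linarith
  · unfold Fmap
    have hG1 : Gmap hN u (x - 2 * π * ⌊(x - u ⟨0, hN⟩) / (2 * π)⌋) < 2 * π :=
      Gmap_lt_top hN u hu hmem hy.1 hy.2
    have hG2 : 0 ≤ Gmap hN u (x' - 2 * π * ⌊(x' - u ⟨0, hN⟩) / (2 * π)⌋) :=
      Gmap_nonneg hN u hu hmem hy'.1
    have hcast : (⌊(x - u ⟨0, hN⟩) / (2 * π)⌋ : ℝ) + 1 ≤ (⌊(x' - u ⟨0, hN⟩) / (2 * π)⌋ : ℝ) := by
      exact_mod_cast Int.add_one_le_iff.mpr hl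
    nlinarith

lemma Fmap_sample (a : Fin N) : Fmap hN u (u a) = 2 * π * a / N := by
  unfold Fmap
  set c := u ⟨0, hN⟩ with hc
  have h2p : (0:ℝ) < 2 * π := two_pi_pos
  have hfl : ⌊(u a - c) / (2 * π)⌋ = 0 := by
    rw [Int.floor_eq_zero_iff]
    constructor
    · apply div_nonneg _ h2p.le
      have : c ≤ u a := hu.monotone (by simp [Fin.le_def])
      linarith
    · rw [div_lt_one h2p]
      have h1 := (hmem a).2
      have h2 := (hmem ⟨0, hN⟩).1
      rw [hc]; linarith
  rw [hfl]
  simp only [Int.cast_zero, mul_zero, add_zero, sub_zero, zero_add]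
  exact Gmap_sample hN u hu hmem a

omit hu hmem in
lemma Fmap_equivariant (x : ℝ) (k : ℤ) :
    Fmap hN u (x + k * (2 * π)) = Fmap hN u x + k * (2 * π) := by
  unfold Fmap
  set c := u ⟨0, hN⟩
  have h2p : (0:ℝ) < 2 * π := two_pi_pos
  have harg : (x + k * (2 * π) - c) / (2 * π) = (x - c) / (2 * π) + k := by
    field_simp
    ring
  rw [harg, Int.floor_add_intCast]
  have : x + k * (2 * π) - 2 * π * (⌊(x - c) / (2 * π)⌋ + k : ℤ) = x - 2 * π * ⌊(x - c) / (2 * π)⌋ := by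
    push_cast; ring
  rw [this]
  push_cast; ring

lemma Fmap_surjective : Function.Surjective (Fmap hN u) := by
  intro z
  set c := u ⟨0, hN⟩ with hc
  have h2p : (0:ℝ) < 2 * π := two_pi_pos
  set m := ⌊z / (2 * π)⌋ with hm
  have e : 2 * π * (z / (2 * π)) = z := by field_simp
  have hz1 : 2 * π * m ≤ z := by
    have h1 := mul_le_mul_of_nonneg_left (Int.floor_le (z / (2 * π))) h2p.le
    rw [e] at h1; exact h1
  have hz2 : z ≤ 2 * π * m + 2 * π := by
    have h1 := mul_lt_mul_of_pos_left (Int.lt_floor_add_one (z / (2 * π))) h2p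
    rw [e] at h1; rw [hm]; nlinarith
  have hagree : ∀ t ∈ Set.Icc (c + 2 * π * m) (c + 2 * π * m + 2 * π),
      Fmap hN u t = 2 * π * m + Gmap hN u (t - 2 * π * m) := by
    intro t ht
    rcases eq_or_lt_of_le ht.2 with he | hl
    · unfold Fmap
      have hfl : ⌊(t - c) / (2 * π)⌋ = m + 1 := by
        rw [he]
        rw [show c + 2 * π * ↑m + 2 * π - c = (m + 1 : ℤ) * (2 * π) by push_cast; ring]
        rw [mul_div_assoc, div_self h2p.ne', mul_one, Int.floor_intCast]
      rw [hfl, he]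
      have e1 : c + 2 * π * ↑m + 2 * π - 2 * π * ↑(m + 1) = c := by push_cast; ring
      have e2 : c + 2 * π * ↑m + 2 * π - 2 * π * ↑m = c + 2 * π := by ring
      rw [e1, e2, Gmap_bot hN u hu hmem, Gmap_top hN u hu hmem]
      push_cast; ring
    · unfold Fmap
      have hfl : ⌊(t - c) / (2 * π)⌋ = m := by
        rw [Int.floor_eq_iff]
        constructor
        · rw [le_div_iff₀ h2p]
          have := ht.1; nlinarith
        · rw [div_lt_iff₀ h2p]
          push_cast; nlinarith
      rw [hfl]
  have hcont : ContinuousOn (fun t => 2 * π * m + Gmap hN u (t - 2 * π * m))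
      (Set.Icc (c + 2 * π * m) (c + 2 * π * m + 2 * π)) := by
    apply Continuous.continuousOn
    exact continuous_const.add ((Gmap_continuous hN u).comp (continuous_id.sub continuous_const))
  have hle : c + 2 * π * m ≤ c + 2 * π * m + 2 * π := by linarith
  have hIVT := intermediate_value_Icc hle hcont
  have hzmem : z ∈ Set.Icc ((fun t => 2 * π * m + Gmap hN u (t - 2 * π * m)) (c + 2 * π * m))
      ((fun t => 2 * π * m + Gmap hN u (t - 2 * π * m)) (c + 2 * π * m + 2 * π)) := by
    simp only
    rw [show c + 2 * π * ↑m - 2 * π * ↑m = c by ring,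
        show c + 2 * π * ↑m + 2 * π - 2 * π * ↑m = c + 2 * π by ring,
        Gmap_bot hN u hu hmem, Gmap_top hN u hu hmem]
    constructor <;> linarith
  obtain ⟨t, ht, hteq⟩ := hIVT hzmem
  exact ⟨t, by rw [hagree t ht]; exact hteq⟩

end flemmas
end PL

noncomputable section Descend

abbrev TwoPi : ℝ := 2 * π

def descend (f : ℝ → ℝ) (hf : ∀ (x : ℝ) (k : ℤ), f (x + k * (2*π)) = f x + k * (2*π)) :
    AddCircle (2*π) → AddCircle (2*π) :=
  Quotient.map' f (by
    intro a b hab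
    rw [QuotientAddGroup.leftRel_apply] at hab ⊢
    obtain ⟨k, hk⟩ := AddSubgroup.mem_zmultiples_iff.mp hab
    apply AddSubgroup.mem_zmultiples_iff.mpr
    refine ⟨k, ?_⟩
    have hb : b = a + k * (2*π) := by
      rw [zsmul_eq_mul] at hk
      linarith
    rw [hb, hf a k]
    rw [zsmul_eq_mul]
    ring)

lemma descend_coe (f : ℝ → ℝ) (hf : ∀ (x : ℝ) (k : ℤ), f (x + k * (2*π)) = f x + k * (2*π))
    (x : ℝ) : descend f hf (↑x) = ↑(f x) := rfl

lemma descend_continuous (f : ℝ → ℝ) (hf : ∀ (x : ℝ) (k : ℤ), f (x + k * (2*π)) = f x + k * (2*π))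
    (hc : Continuous f) : Continuous (descend f hf) := by
  rw [isQuotientMap_quotient_mk'.continuous_iff]
  exact (AddCircle.continuous_mk' (2*π)).comp hc

def circleHomeo (F : ℝ ≃o ℝ) (hF : ∀ (x : ℝ) (k : ℤ), F (x + k * (2*π)) = F x + k * (2*π)) :
    AddCircle (2*π) ≃ₜ AddCircle (2*π) where
  toFun := descend F hF
  invFun := descend F.symm (by
    intro x k
    apply F.injective
    rw [F.apply_symm_apply, hF, F.apply_symm_apply])
  left_inv := by
    intro x
    induction x using Quotient.inductionOn' with
    | h a => show descend _ _ (descend _ _ ↑a) = _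
             rw [descend_coe, descend_coe, F.symm_apply_apply]
  right_inv := by
    intro x
    induction x using Quotient.inductionOn' with
    | h a => show descend _ _ (descend _ _ ↑a) = _
             rw [descend_coe, descend_coe, F.apply_symm_apply]
  continuous_toFun := descend_continuous (⇑F) hF (OrderIso.continuous F)
  continuous_invFun := descend_continuous (⇑F.symm) (by
    intro x k
    apply F.injective
    rw [F.apply_symm_apply, hF, F.apply_symm_apply]) (OrderIso.continuous F.symm)

lemma circleHomeo_coe (F : ℝ ≃o ℝ) (hF : ∀ (x : ℝ) (k : ℤ), F (x + k * (2*π)) = F x + k * (2*π))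
    (x : ℝ) : circleHomeo F hF (↑x) = ↑(F x) := by
  show descend (⇑F) hF (↑x) = ↑(F x)
  exact descend_coe _ _ _

end Descend
lemma coe_eq_coe_iff {a b : ℝ} :
    (a : AddCircle (2 * π)) = (b : AddCircle (2 * π)) ↔ ∃ k : ℤ, a = b + k * (2 * π) := by
  rw [QuotientAddGroup.eq_iff_sub_mem]
  constructor
  · intro h
    obtain ⟨k, hk⟩ := AddSubgroup.mem_zmultiples_iff.mp h
    exact ⟨k, by rw [zsmul_eq_mul] at hk; linarith⟩
  · rintro ⟨k, hk⟩
    exact AddSubgroup.mem_zmultiples_iff.mpr ⟨k, by rw [zsmul_eq_mul]; linarith⟩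

lemma mem_openArc_iff (h2p : (0:ℝ) < 2 * π) (P X Q : ℝ) :
    (↑X ∈ openArc (↑P) (↑Q)) ↔
      0 < toIcoMod h2p 0 (X - P) ∧ toIcoMod h2p 0 (X - P) < toIcoMod h2p 0 (Q - P) := by
  constructor
  · rintro ⟨P', X', Q', hP, hX, hQ, h1, h2, h3⟩
    obtain ⟨kp, hkp⟩ := coe_eq_coe_iff.mp hP
    obtain ⟨kx, hkx⟩ := coe_eq_coe_iff.mp hX
    obtain ⟨kq, hkq⟩ := coe_eq_coe_iff.mp hQ
    have hXP : toIcoMod h2p 0 (X - P) = X' - P' := by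
      rw [toIcoMod_eq_iff h2p]
      refine ⟨⟨by linarith, by rw [zero_add]; linarith⟩, ⟨kp - kx, ?_⟩⟩
      rw [zsmul_eq_mul]; push_cast; linarith
    have hQP : toIcoMod h2p 0 (Q - P) = Q' - P' := by
      rw [toIcoMod_eq_iff h2p]
      refine ⟨⟨by linarith, by rw [zero_add]; linarith⟩, ⟨kp - kq, ?_⟩⟩
      rw [zsmul_eq_mul]; push_cast; linarith
    rw [hXP, hQP]
    exact ⟨by linarith, by linarith⟩
  · rintro ⟨h1, h2⟩
    obtain ⟨zx, hzx⟩ := ((toIcoMod_eq_iff h2p).mp (rfl : toIcoMod h2p 0 (X - P) = _)).2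
    obtain ⟨zq, hzq⟩ := ((toIcoMod_eq_iff h2p).mp (rfl : toIcoMod h2p 0 (Q - P) = _)).2
    have hx2 := (toIcoMod_mem_Ico h2p 0 (X - P)).2
    have hq2 := (toIcoMod_mem_Ico h2p 0 (Q - P)).2
    rw [zero_add] at hx2 hq2
    rw [zsmul_eq_mul] at hzx hzq
    refine ⟨P, P + toIcoMod h2p 0 (X - P), P + toIcoMod h2p 0 (Q - P), rfl, ?_, ?_,
      by linarith, by linarith, by linarith⟩
    · exact coe_eq_coe_iff.mpr ⟨-zx, by push_cast; linarith⟩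
    · exact coe_eq_coe_iff.mpr ⟨-zq, by push_cast; linarith⟩

lemma toIcoMod_sub_of_Ico (h2p : (0:ℝ) < 2 * π) {A B : ℝ}
    (hA : A ∈ Set.Ico (0:ℝ) (2 * π)) (hB : B ∈ Set.Ico (0:ℝ) (2 * π)) :
    toIcoMod h2p 0 (A - B) = if B ≤ A then A - B else A - B + 2 * π := by
  obtain ⟨hA1, hA2⟩ := hA
  obtain ⟨hB1, hB2⟩ := hB
  split_ifs with h
  · rw [toIcoMod_eq_iff h2p]
    exact ⟨⟨by linarith, by rw [zero_add]; linarith⟩, ⟨0, by simp⟩⟩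
  · push_neg at h
    rw [toIcoMod_eq_iff h2p]
    refine ⟨⟨by linarith, by rw [zero_add]; linarith⟩, ⟨-1, ?_⟩⟩
    rw [zsmul_eq_mul]; push_cast; ring

noncomputable section Comb

def offIdx (N : ℕ) (a k : Fin N) : ℕ :=
  if a.val ≤ k.val then k.val - a.val else k.val + N - a.val

lemma offIdx_lt (N : ℕ) (a k : Fin N) : offIdx N a k < N := by
  unfold offIdx
  have := a.isLt; have := k.isLt
  split_ifs <;> omega

lemma offIdx_eq_zero (N : ℕ) (a k : Fin N) : offIdx N a k = 0 ↔ k = a := by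
  unfold offIdx
  rw [Fin.ext_iff]
  have := a.isLt; have := k.isLt
  split_ifs <;> omega

lemma offIdx_pos (N : ℕ) (a k : Fin N) : 0 < offIdx N a k ↔ k ≠ a := by
  rw [Nat.pos_iff_ne_zero, ne_eq, ne_eq, not_iff_not]
  exact offIdx_eq_zero N a k

lemma offIdx_inj (N : ℕ) (a : Fin N) : Function.Injective (offIdx N a) := by
  intro k l h
  unfold offIdx at h
  have := a.isLt; have := k.isLt; have := l.isLt
  rw [Fin.ext_iff]
  split_ifs at h <;> omega

variable {N : ℕ} (h2p : (0:ℝ) < 2 * π) (u : Fin N → ℝ)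
  (hu : StrictMono u) (hmem : ∀ k, u k ∈ Set.Ico (0:ℝ) (2 * π))

include hu hmem in
lemma key_lt (a k l : Fin N) :
    (toIcoMod h2p 0 (u k - u a) < toIcoMod h2p 0 (u l - u a)) ↔ offIdx N a k < offIdx N a l := by
  rw [toIcoMod_sub_of_Ico h2p (hmem k) (hmem a), toIcoMod_sub_of_Ico h2p (hmem l) (hmem a)]
  unfold offIdx
  have hk1 := (hmem k).1; have hk2 := (hmem k).2
  have hl1 := (hmem l).1; have hl2 := (hmem l).2
  have ha1 := (hmem a).1; have ha2 := (hmem a).2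
  have hmono : ∀ x y : Fin N, u x < u y ↔ x.val < y.val := fun x y => by
    rw [hu.lt_iff_lt, Fin.lt_def]
  have hle : ∀ x y : Fin N, u x ≤ u y ↔ x.val ≤ y.val := fun x y => by
    rw [hu.le_iff_le, Fin.le_def]
  have := a.isLt; have := k.isLt; have := l.isLt
  rcases le_or_gt a.val k.val with h1 | h1 <;> rcases le_or_gt a.val l.val with h2 | h2
  · rw [if_pos ((hle a k).mpr h1), if_pos ((hle a l).mpr h2), if_pos h1, if_pos h2]
    rw [sub_lt_sub_iff_right, hmono]
    omega
  · rw [if_pos ((hle a k).mpr h1), if_neg (fun hc => by rw [hle] at hc; omega),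
      if_pos h1, if_neg (by omega)]
    constructor
    · intro _; omega
    · intro _; linarith
  · rw [if_neg (fun hc => by rw [hle] at hc; omega), if_pos ((hle a l).mpr h2),
      if_neg (by omega), if_pos h2]
    constructor
    · intro hc; linarith
    · intro hc; omega
  · rw [if_neg (fun hc => by rw [hle] at hc; omega), if_neg (fun hc => by rw [hle] at hc; omega),
      if_neg (by omega), if_neg (by omega)]
    rw [add_lt_add_iff_right, sub_lt_sub_iff_right, hmono]
    omega

include hu hmem in
lemma key_pos (a k : Fin N) : (0 < toIcoMod h2p 0 (u k - u a)) ↔ k ≠ a := by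
  rw [toIcoMod_sub_of_Ico h2p (hmem k) (hmem a)]
  have hk1 := (hmem k).1; have hk2 := (hmem k).2
  have ha1 := (hmem a).1; have ha2 := (hmem a).2
  split_ifs with h
  · constructor
    · intro hp he; rw [he] at hp; linarith
    · intro hne
      have : u a < u k := lt_of_le_of_ne h (fun he => hne (hu.injective he.symm))
      linarith
  · constructor
    · intro _ he; rw [he] at h; exact h le_rfl
    · intro _; linarith

end Comb

end Aux

open Real in
theorem alternating_pairs_antipodal (n : ℕ) (hn : 1 ≤ n)
    (v v' : Fin (2 * n) → AddCircle (2 * π))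
    (hdist : Function.Injective (Sum.elim v v'))
    (halt : ∀ i j : Fin (2 * n), i ≠ j →
      Xor' (v j ∈ openArc (v i) (v' i)) (v' j ∈ openArc (v i) (v' i))) :
    ∃ f : AddCircle (2 * π) ≃ₜ AddCircle (2 * π),
      ∀ i, f (v' i) = f (v i) + ((π : ℝ) : AddCircle (2 * π)) := by
  classical
  have h2p : (0:ℝ) < 2 * π := Real.two_pi_pos
  set N := 4 * n with hNdef
  have hN : 0 < N := by omega
  set pt : Fin (2*n) ⊕ Fin (2*n) → AddCircle (2*π) := Sum.elim v v' with hpt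
  set W : Fin (2*n) ⊕ Fin (2*n) → ℝ :=
    fun z => ((QuotientAddGroup.equivIcoMod h2p 0 (pt z)) : ℝ) with hWdef
  have hWmk : ∀ z, ((W z : ℝ) : AddCircle (2*π)) = pt z := by
    intro z
    have h := (QuotientAddGroup.equivIcoMod h2p 0).symm_apply_apply (pt z)
    rwa [QuotientAddGroup.equivIcoMod_symm_apply] at h
  have hWmem : ∀ z, W z ∈ Set.Ico (0:ℝ) (2*π) := by
    intro z
    have h := (QuotientAddGroup.equivIcoMod h2p 0 (pt z)).2
    exact ⟨h.1, by have := h.2; linarith⟩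
  have hWinj : Function.Injective W := by
    intro z z' h
    apply hdist
    show pt z = pt z'
    rw [← hWmk z, ← hWmk z', h]
  set pts : Finset ℝ := Finset.image W Finset.univ with hpts
  have hcard : pts.card = N := by
    rw [hpts, Finset.card_image_of_injective _ hWinj, Finset.card_univ, Fintype.card_sum,
      Fintype.card_fin]
    omega
  set u : Fin N ≃o {x // x ∈ pts} := pts.orderIsoOfFin hcard with hudef
  set uv : Fin N → ℝ := fun k => ((u k : {x // x ∈ pts}) : ℝ) with huvdef
  have huv : StrictMono uv := by
    intro x y h
    exact Subtype.coe_lt_coe.mpr (u.strictMono h)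
  have humem : ∀ k, uv k ∈ Set.Ico (0:ℝ) (2*π) := by
    intro k
    have h1 : ((u k : {x // x ∈ pts}) : ℝ) ∈ Finset.image W Finset.univ := (u k).2
    obtain ⟨z, _, hz⟩ := Finset.mem_image.mp h1
    rw [huvdef]
    simp only
    rw [← hz]
    exact hWmem z
  have hposmem : ∀ z, W z ∈ pts := by
    intro z
    rw [hpts]
    exact Finset.mem_image_of_mem _ (Finset.mem_univ z)
  set pos : Fin (2*n) ⊕ Fin (2*n) → Fin N := fun z => u.symm ⟨W z, hposmem z⟩ with hposdef
  have hposval : ∀ z, uv (pos z) = W z := by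
    intro z
    rw [huvdef, hposdef]
    simp only [OrderIso.apply_symm_apply]
  have hposinj : Function.Injective pos := by
    intro z z' h
    apply hWinj
    rw [← hposval z, ← hposval z', h]
  have hptco : ∀ z, pt z = ↑(uv (pos z)) := by
    intro z
    rw [hposval]
    exact (hWmk z).symm
  -- membership characterization
  have harc : ∀ (i : Fin (2*n)) (z),
      (pt z ∈ openArc (v i) (v' i)) ↔
      (0 < offIdx N (pos (Sum.inl i)) (pos z) ∧
        offIdx N (pos (Sum.inl i)) (pos z) < offIdx N (pos (Sum.inl i)) (pos (Sum.inr i))) := by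
    intro i z
    have e1 : v i = ↑(uv (pos (Sum.inl i))) := hptco (Sum.inl i)
    have e2 : v' i = ↑(uv (pos (Sum.inr i))) := hptco (Sum.inr i)
    rw [e1, e2, hptco z, mem_openArc_iff h2p]
    rw [key_lt h2p uv huv humem, key_pos h2p uv huv humem]
    rw [← offIdx_pos N (pos (Sum.inl i)) (pos z)]
  -- the combinatorial count
  have hoff2n : ∀ i : Fin (2*n),
      offIdx N (pos (Sum.inl i)) (pos (Sum.inr i)) = 2*n := by
    intro i
    set a := pos (Sum.inl i) with ha
    set b := pos (Sum.inr i) with hb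
    have hab : b ≠ a := by
      intro h
      have := hposinj h
      simp at this
    have hD0 : 0 < offIdx N a b := (offIdx_pos N a b).mpr hab
    have hDN : offIdx N a b < N := offIdx_lt N a b
    set D := offIdx N a b with hD
    set M : Finset (Fin (2*n) ⊕ Fin (2*n)) :=
      Finset.univ.filter (fun z => pt z ∈ openArc (v i) (v' i)) with hM
    have hmemM : ∀ z, z ∈ M ↔ (0 < offIdx N a (pos z) ∧ offIdx N a (pos z) < D) := by
      intro z
      rw [hM, Finset.mem_filter]
      constructor
      · intro h; exact (harc i z).mp h.2
      · intro h; exact ⟨Finset.mem_univ _, (harc i z).mpr h⟩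
    -- first count : M.card = D - 1
    set q : Fin (2*n) ⊕ Fin (2*n) → Fin N := fun z => ⟨offIdx N a (pos z), offIdx_lt N a (pos z)⟩
      with hq
    have hqinj : Function.Injective q := by
      intro z z' h
      apply hposinj
      apply offIdx_inj N a
      exact congrArg Fin.val h
    have hqbij : Function.Bijective q :=
      (Fintype.bijective_iff_injective_and_card q).mpr ⟨hqinj, by
        rw [Fintype.card_sum, Fintype.card_fin, Fintype.card_fin]
        omega⟩
    have himg : M.image q = Finset.univ.filter (fun m : Fin N => 0 < m.val ∧ m.val < D) := by
      ext m
      simp only [Finset.mem_image, Finset.mem_filter, Finset.mem_univ, true_and]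
      constructor
      · rintro ⟨z, hz, rfl⟩
        exact (hmemM z).mp hz
      · intro hm
        obtain ⟨z, hz⟩ := hqbij.2 m
        refine ⟨z, ?_, hz⟩
        rw [hmemM z]
        rw [← hz] at hm
        exact hm
    have hcard1 : M.card = D - 1 := by
      rw [← Finset.card_image_of_injective M hqinj, himg]
      have hfe : Finset.univ.filter (fun m : Fin N => 0 < m.val ∧ m.val < D)
          = Finset.Ioo (⟨0, hN⟩ : Fin N) ⟨D, hDN⟩ := by
        ext m
        rw [Finset.mem_filter, Finset.mem_Ioo]
        simp only [Finset.mem_univ, true_and, Fin.lt_def]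
      rw [hfe, Fin.card_Ioo]
      simp
    -- second count : M.card = 2*n - 1
    set T := Finset.univ.filter (fun j : Fin (2*n) => j ≠ i) with hT
    have hcardT : T.card = 2*n - 1 := by
      rw [hT, Finset.filter_ne', Finset.card_erase_of_mem (Finset.mem_univ i),
        Finset.card_univ, Fintype.card_fin]
    have hnotl : Sum.inl i ∉ M := by
      intro h
      have := ((hmemM _).mp h).1
      rw [← ha] at this
      rw [offIdx_pos] at this
      exact this rfl
    have hnotr : Sum.inr i ∉ M := by
      intro h
      have := ((hmemM _).mp h).2
      rw [← hb] at this
      exact lt_irrefl _ this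
    have hcard2 : M.card = T.card := by
      apply Finset.card_bij (fun z _ => Sum.elim id id z)
      · rintro (j | j) hz
        · simp only [Sum.elim_inl, id]
          rw [hT, Finset.mem_filter]
          refine ⟨Finset.mem_univ _, ?_⟩
          intro he
          rw [he] at hz
          exact hnotl hz
        · simp only [Sum.elim_inr, id]
          rw [hT, Finset.mem_filter]
          refine ⟨Finset.mem_univ _, ?_⟩
          intro he
          rw [he] at hz
          exact hnotr hz
      · rintro (j | j) hz1 (j' | j') hz2 he <;> simp only [Sum.elim_inl, Sum.elim_inr, id] at he
        · rw [he]
        · -- inl j, inr j' with j = j' : both in arc, contradiction with Xor'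
          exfalso
          subst he
          have hji : j ≠ i := by
            intro he'
            rw [he'] at hz1
            exact hnotl hz1
          have hx := halt i j (Ne.symm hji)
          have m1 : v j ∈ openArc (v i) (v' i) := by
            have := (Finset.mem_filter.mp hz1).2
            exact this
          have m2 : v' j ∈ openArc (v i) (v' i) := by
            have := (Finset.mem_filter.mp hz2).2
            exact this
          rcases hx with ⟨_, hq2⟩ | ⟨_, hq2⟩
          · exact hq2 m2
          · exact hq2 m1
        · exfalso
          subst he
          have hji : j ≠ i := by
            intro he'
            rw [he'] at hz2
            exact hnotl hz2
          have hx := halt i j (Ne.symm hji)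
          have m1 : v j ∈ openArc (v i) (v' i) := (Finset.mem_filter.mp hz2).2
          have m2 : v' j ∈ openArc (v i) (v' i) := (Finset.mem_filter.mp hz1).2
          rcases hx with ⟨_, hq2⟩ | ⟨_, hq2⟩
          · exact hq2 m2
          · exact hq2 m1
        · rw [he]
      · intro j hj
        rw [hT, Finset.mem_filter] at hj
        have hx := halt i j (Ne.symm hj.2)
        rcases hx with ⟨h1, _⟩ | ⟨h1, _⟩
        · refine ⟨Sum.inl j, ?_, rfl⟩
          rw [hM, Finset.mem_filter]
          exact ⟨Finset.mem_univ _, h1⟩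
        · refine ⟨Sum.inr j, ?_, rfl⟩
          rw [hM, Finset.mem_filter]
          exact ⟨Finset.mem_univ _, h1⟩
    rw [hcard1, hcardT] at hcard2
    omega
  -- build the homeomorphism
  have hFmono := Fmap_strictMono hN uv huv humem
  have hFsurj := Fmap_surjective hN uv huv humem
  set Fo : ℝ ≃o ℝ := StrictMono.orderIsoOfSurjective _ hFmono hFsurj with hFodef
  have hFoeq : ∀ x, Fo x = Fmap hN uv x := fun x => by
    rw [hFodef, StrictMono.coe_orderIsoOfSurjective]
  have hFeqv : ∀ (x : ℝ) (k : ℤ), Fo (x + k*(2*π)) = Fo x + k*(2*π) := by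
    intro x k
    rw [hFoeq, hFoeq]
    exact Fmap_equivariant hN uv x k
  refine ⟨circleHomeo Fo hFeqv, ?_⟩
  intro i
  have hsample : ∀ z, circleHomeo Fo hFeqv (pt z) =
      ((2*π*((pos z : Fin N) : ℕ)/N : ℝ) : AddCircle (2*π)) := by
    intro z
    rw [hptco z, circleHomeo_coe, hFoeq, Fmap_sample hN uv huv humem]
  have h1 : circleHomeo Fo hFeqv (v' i) =
      ((2*π*((pos (Sum.inr i) : Fin N) : ℕ)/N : ℝ) : AddCircle (2*π)) := hsample (Sum.inr i)
  have h2 : circleHomeo Fo hFeqv (v i) =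
      ((2*π*((pos (Sum.inl i) : Fin N) : ℕ)/N : ℝ) : AddCircle (2*π)) := hsample (Sum.inl i)
  rw [h1, h2]
  have hD := hoff2n i
  set A := ((pos (Sum.inl i) : Fin N) : ℕ) with hA
  set B := ((pos (Sum.inr i) : Fin N) : ℕ) with hB
  have hAN : A < N := (pos (Sum.inl i)).isLt
  have hBN : B < N := (pos (Sum.inr i)).isLt
  have hcoeadd : ((2*π*A/N : ℝ) : AddCircle (2*π)) + ((π : ℝ) : AddCircle (2*π))
      = ((2*π*A/N + π : ℝ) : AddCircle (2*π)) := rfl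
  rw [hcoeadd, coe_eq_coe_iff]
  unfold offIdx at hD
  have hNr : (N:ℝ) = 4*n := by rw [hNdef]; push_cast; ring
  have hnne : (n:ℝ) ≠ 0 := Nat.cast_ne_zero.mpr (by omega)
  split_ifs at hD with hcase
  · -- B = A + 2n
    refine ⟨0, ?_⟩
    have hBA : (B:ℝ) = A + 2*n := by
      have : B = A + 2*n := by omega
      rw [this]; push_cast; ring
    rw [hBA, hNr]
    push_cast
    field_simp
    ring
  · -- B + N - A = 2n, i.e. B = A + 2n - N
    refine ⟨-1, ?_⟩
    have hBA : (B:ℝ) = A + 2*n - N := by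
      have : B + N = A + 2*n := by omega
      have h2 : (B:ℝ) + N = A + 2*n := by exact_mod_cast this
      linarith
    rw [hBA, hNr]
    push_cast
    field_simp
    ring
end
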